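/- With the above data, let c ∈ W satisfy c²(−ν₁ψ) + c(−λ₁ψ + μ₁θ + ν₁Φ) + (λ₁Φ − Δ₁θ) = 0, and set i := (Φ − ψc)/θ, a := (σ⁻¹(R) + iQ)/(σ⁻¹(Q) + piR), b' := (σ⁻¹(T) + iS)/(σ⁻¹(S) + piT). Write {e₁, f₁, e₂, f₂, e₃, f₃} for the standard basis of D(x,y,z) and {e₁', f₁', e₂', f₂', e₃', f₃'} for the standard basis of D(0,0,0). Then the W-linear map φ : D(x,y,z) → D(0,0,0) determined by φ(e₁) = p²e₁', φ(f₁) = p²f₁', φ(e₂) = pe₁' + pβ'f₁' + pe₂' + pf₂', φ(f₂) = p²σ(β')e₁' + pf₁' + p²e₂' + pf₂', φ(e₃) = Qe₁' + Rf₁' + Se₂' + Tf₂' + e₃', φ(f₃) = pσ(R)e₁' + σ(Q)f₁' + pσ(T)e₂' + σ(S)f₂' + f₃' is an isogeny of Dieudonné modules; the submodules Fil := W(f₁ + pae₁) + W(f₂ − σ⁻¹(x)e₁ + pce₂) + W(f₃ − σ⁻¹(y)e₂ − σ⁻¹(z)e₁ + pie₃) ⊆ D(x,y,z) and Fil' :=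 W(f₁' + pae₁') + W(f₂' + pb'e₂') + W(f₃' + pie₃') ⊆ D(0,0,0) are admissible filtrations; and φ(Fil) ⊆ Fil'. -/

import Mathlib

noncomputable section

open Pointwise

/-- `k`, an algebraic closure of the field `𝔽_p` with `p` elements. -/
abbrev Kbar (p : ℕ) [Fact p.Prime] : Type _ := AlgebraicClosure (ZMod p)

/-- `W = W(k)`, the ring of Witt vectors with coefficients in `k`. -/
abbrev Wt (p : ℕ) [Fact p.Prime] : Type _ := WittVector p (Kbar p)

/-- `σ : W → W`, the Witt vector Frobenius automorphism, lifting the `p`-th power map on `k`. -/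
def σW (p : ℕ) [Fact p.Prime] : Wt p ≃+* Wt p := WittVector.frobeniusEquiv p (Kbar p)

/-- Frobenius of the Dieudonné module `D(x,y,z)`, which is free of rank 6 over `W` with basis
`e₁, f₁, e₂, f₂, e₃, f₃` (coordinates `0,…,5`): `F e₁ = f₁`, `F f₁ = p e₁`, `F e₂ = f₂`,
`F f₂ = p e₂ + x f₁`, `F e₃ = f₃`, `F f₃ = p e₃ + y f₂ + z f₁`, extended `σ`-semilinearly. -/
def FD (p : ℕ) [Fact p.Prime] (x y z : Wt p) : (Fin 6 → Wt p) → (Fin 6 → Wt p) := fun v =>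
  ![(p : Wt p) * σW p (v 1),
    σW p (v 0) + x * σW p (v 3) + z * σW p (v 5),
    (p : Wt p) * σW p (v 3),
    σW p (v 2) + y * σW p (v 5),
    (p : Wt p) * σW p (v 5),
    σW p (v 4)]

/-- Verschiebung of `D(x,y,z)`: `V e₁ = f₁`, `V f₁ = p e₁`, `V e₂ = f₂ − σ⁻¹(x) e₁`,
`V f₂ = p e₂`, `V e₃ = f₃ − σ⁻¹(y) e₂ − σ⁻¹(z) e₁`, `V f₃ = p e₃`, extended
`σ⁻¹`-semilinearly. -/
def VD (p : ℕ) [Fact p.Prime] (x y z : Wt p) : (Fin 6 → Wt p) → (Fin 6 → Wt p) := fun v =>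
  ![(p : Wt p) * (σW p).symm (v 1) - (σW p).symm x * (σW p).symm (v 2)
      - (σW p).symm z * (σW p).symm (v 4),
    (σW p).symm (v 0),
    (p : Wt p) * (σW p).symm (v 3) - (σW p).symm y * (σW p).symm (v 4),
    (σW p).symm (v 2),
    (p : Wt p) * (σW p).symm (v 5),
    (σW p).symm (v 4)]

/-- An isomorphism of Dieudonné modules `D(x,y,z) ≅ D(x',y',z')`: a bijective `W`-linear map
commuting with the Frobenii and the Verschiebungen. -/
def DIso (p : ℕ) [Fact p.Prime] (x y z x' y' z' : Wt p) : Prop :=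
  ∃ φ : (Fin 6 → Wt p) ≃ₗ[Wt p] (Fin 6 → Wt p),
    (∀ v, φ (FD p x y z v) = FD p x' y' z' (φ v)) ∧
    (∀ v, φ (VD p x y z v) = VD p x' y' z' (φ v))

/-- `Fil` is an admissible filtration of a Dieudonné module `(D, F, V)` that is free of rank
`2g` over `W`: a `W`-submodule of rank `g` such that `D/Fil` is torsion-free and the image of
`Fil` in `D/pD` equals the kernel of the endomorphism of `D/pD` induced by `F`. -/
def AdmissibleFil (p : ℕ) [Fact p.Prime] {D : Type*} [AddCommGroup D] [Module (Wt p) D]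
    (F : D → D) (g : ℕ) (Fil : Submodule (Wt p) D) : Prop :=
  Module.rank (Wt p) Fil = g ∧
  NoZeroSMulDivisors (Wt p) (D ⧸ Fil) ∧
  ∀ d : D, (∃ m ∈ Fil, ∃ d' : D, d = m + (p : Wt p) • d') ↔ (∃ d' : D, F d = (p : Wt p) • d')

set_option maxHeartbeats 2000000

namespace St15

@[simp] lemma cv6_1 {α : Type*} (a : α) (u : Fin 5 → α) : Matrix.vecCons a u (1 : Fin 6) = u 0 := rfl
@[simp] lemma cv6_2 {α : Type*} (a : α) (u : Fin 5 → α) : Matrix.vecCons a u (2 : Fin 6) = u 1 := rfl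
@[simp] lemma cv6_3 {α : Type*} (a : α) (u : Fin 5 → α) : Matrix.vecCons a u (3 : Fin 6) = u 2 := rfl
@[simp] lemma cv6_4 {α : Type*} (a : α) (u : Fin 5 → α) : Matrix.vecCons a u (4 : Fin 6) = u 3 := rfl
@[simp] lemma cv6_5 {α : Type*} (a : α) (u : Fin 5 → α) : Matrix.vecCons a u (5 : Fin 6) = u 4 := rfl
@[simp] lemma cv5_1 {α : Type*} (a : α) (u : Fin 4 → α) : Matrix.vecCons a u (1 : Fin 5) = u 0 := rfl
@[simp] lemma cv5_2 {α : Type*} (a : α) (u : Fin 4 → α) : Matrix.vecCons a u (2 : Fin 5) = u 1 := rfl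
@[simp] lemma cv5_3 {α : Type*} (a : α) (u : Fin 4 → α) : Matrix.vecCons a u (3 : Fin 5) = u 2 := rfl
@[simp] lemma cv5_4 {α : Type*} (a : α) (u : Fin 4 → α) : Matrix.vecCons a u (4 : Fin 5) = u 3 := rfl
@[simp] lemma cv4_1 {α : Type*} (a : α) (u : Fin 3 → α) : Matrix.vecCons a u (1 : Fin 4) = u 0 := rfl
@[simp] lemma cv4_2 {α : Type*} (a : α) (u : Fin 3 → α) : Matrix.vecCons a u (2 : Fin 4) = u 1 := rfl
@[simp] lemma cv4_3 {α : Type*} (a : α) (u : Fin 3 → α) : Matrix.vecCons a u (3 : Fin 4) = u 2 := rfl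
@[simp] lemma cv3_1 {α : Type*} (a : α) (u : Fin 2 → α) : Matrix.vecCons a u (1 : Fin 3) = u 0 := rfl
@[simp] lemma cv3_2 {α : Type*} (a : α) (u : Fin 2 → α) : Matrix.vecCons a u (2 : Fin 3) = u 1 := rfl
@[simp] lemma cv2_1 {α : Type*} (a : α) (u : Fin 1 → α) : Matrix.vecCons a u (1 : Fin 2) = u 0 := rfl

@[simp] lemma v6_0 {α : Type*} (a0 a1 a2 a3 a4 a5 : α) : ![a0,a1,a2,a3,a4,a5] (0 : Fin 6) = a0 := rfl
@[simp] lemma v6_1 {α : Type*} (a0 a1 a2 a3 a4 a5 : α) : ![a0,a1,a2,a3,a4,a5] (1 : Fin 6) = a1 := rfl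
@[simp] lemma v6_2 {α : Type*} (a0 a1 a2 a3 a4 a5 : α) : ![a0,a1,a2,a3,a4,a5] (2 : Fin 6) = a2 := rfl
@[simp] lemma v6_3 {α : Type*} (a0 a1 a2 a3 a4 a5 : α) : ![a0,a1,a2,a3,a4,a5] (3 : Fin 6) = a3 := rfl
@[simp] lemma v6_4 {α : Type*} (a0 a1 a2 a3 a4 a5 : α) : ![a0,a1,a2,a3,a4,a5] (4 : Fin 6) = a4 := rfl
@[simp] lemma v6_5 {α : Type*} (a0 a1 a2 a3 a4 a5 : α) : ![a0,a1,a2,a3,a4,a5] (5 : Fin 6) = a5 := rfl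

lemma vec6_decomp {R : Type*} [CommRing R] (v : Fin 6 → R) :
    v = v 0 • (Pi.single 0 1 : Fin 6 → R) + v 1 • (Pi.single 1 1 : Fin 6 → R)
      + v 2 • (Pi.single 2 1 : Fin 6 → R) + v 3 • (Pi.single 3 1 : Fin 6 → R)
      + v 4 • (Pi.single 4 1 : Fin 6 → R) + v 5 • (Pi.single 5 1 : Fin 6 → R) := by
  funext j; fin_cases j <;> simp [Pi.single_apply]

lemma vec6_decomp' {R : Type*} [CommRing R] (v : Fin 6 → R) :
    v = v 0 • ![1,0,0,0,0,0] + v 1 • ![0,1,0,0,0,0] + v 2 • ![0,0,1,0,0,0]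
      + v 3 • ![0,0,0,1,0,0] + v 4 • ![0,0,0,0,1,0] + v 5 • ![0,0,0,0,0,(1:R)] := by
  funext j; fin_cases j <;> simp

lemma mem_span_triple {R M : Type*} [CommRing R] [AddCommGroup M] [Module R M] {a b c v : M} :
    v ∈ Submodule.span R {a, b, c} ↔ ∃ α β γ : R, v = α • a + β • b + γ • c := by
  constructor
  · intro h
    rw [Submodule.mem_span_insert] at h
    obtain ⟨α, w, hw, rfl⟩ := h
    rw [Submodule.mem_span_insert] at hw
    obtain ⟨β, w', hw', rfl⟩ := hw
    rw [Submodule.mem_span_singleton] at hw'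
    obtain ⟨γ, rfl⟩ := hw'
    exact ⟨α, β, γ, by rw [add_assoc]⟩
  · rintro ⟨α, β, γ, rfl⟩
    have ha : a ∈ Submodule.span R {a,b,c} := Submodule.subset_span (by simp)
    have hb : b ∈ Submodule.span R {a,b,c} := Submodule.subset_span (by simp)
    have hc : c ∈ Submodule.span R {a,b,c} := Submodule.subset_span (by simp)
    exact add_mem (add_mem (Submodule.smul_mem _ α ha) (Submodule.smul_mem _ β hb))
      (Submodule.smul_mem _ γ hc)

lemma hcan {R : Type*} [CommRing R] [IsDomain R] {α u v : R} (hα : α ≠ 0)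
    (h : α * (u - v) = 0) : u = v := by
  rcases mul_eq_zero.mp h with h' | h'
  · exact absurd h' hα
  · exact sub_eq_zero.mp h'

variable {p : ℕ} [Fact p.Prime]

/-- The linear map whose kernel is the filtration. -/
def rmap (a c i xs ys zs : Wt p) : (Fin 6 → Wt p) →ₗ[Wt p] (Fin 3 → Wt p) where
  toFun v := ![v 0 - (p:Wt p)*a*v 1 + xs*v 3 + zs*v 5,
               v 2 - (p:Wt p)*c*v 3 + ys*v 5,
               v 4 - (p:Wt p)*i*v 5]
  map_add' u v := by funext j; fin_cases j <;> (simp; ring)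
  map_smul' r v := by funext j; fin_cases j <;> (simp; ring)

lemma admissible_generic (x y z a c i : Wt p) :
    AdmissibleFil p (FD p x y z) 3
      (Submodule.span (Wt p)
        {![(p : Wt p) * a, 1, 0, 0, 0, 0],
          ![-(σW p).symm x, 0, (p : Wt p) * c, 1, 0, 0],
          ![-(σW p).symm z, 0, -(σW p).symm y, 0, (p : Wt p) * i, 1]}) := by
  have hσ : ∀ w : Wt p, σW p ((σW p).symm w) = w := (σW p).apply_symm_apply
  set xs := (σW p).symm x with hxs
  set ys := (σW p).symm y with hys
  set zs := (σW p).symm z with hzs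
  set g1 : Fin 6 → Wt p := ![(p:Wt p) * a, 1, 0, 0, 0, 0] with hg1
  set g2 : Fin 6 → Wt p := ![-xs, 0, (p:Wt p)*c, 1, 0, 0] with hg2
  set g3 : Fin 6 → Wt p := ![-zs, 0, -ys, 0, (p:Wt p)*i, 1] with hg3
  have hli : LinearIndependent (Wt p) ![g1, g2, g3] := by
    rw [Fintype.linearIndependent_iff]
    intro g hg
    have h1 := congrFun hg 1
    have h3 := congrFun hg 3
    have h5 := congrFun hg 5
    simp [Fin.sum_univ_three, hg1, hg2, hg3] at h1 h3 h5
    intro j; fin_cases j <;> simp_all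
  have hkerr : ∀ v, rmap (p:=p) a c i xs ys zs v = 0 ↔
      v ∈ Submodule.span (Wt p) {g1, g2, g3} := by
    intro v
    constructor
    · intro hv
      have h0 := congrFun hv 0
      have h1 := congrFun hv 1
      have h2 := congrFun hv 2
      simp [rmap] at h0 h1 h2
      rw [mem_span_triple]
      refine ⟨v 1, v 3, v 5, ?_⟩
      funext j
      fin_cases j
      · simp [hg1, hg2, hg3]; linear_combination h0
      · simp [hg1, hg2, hg3]
      · simp [hg1, hg2, hg3]; linear_combination h1
      · simp [hg1, hg2, hg3]
      · simp [hg1, hg2, hg3]; linear_combination h2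
      · simp [hg1, hg2, hg3]
    · intro hv
      rw [mem_span_triple] at hv
      obtain ⟨α, β, γ, rfl⟩ := hv
      funext j
      fin_cases j <;> (simp [rmap, hg1, hg2, hg3]; ring)
  refine ⟨?_, ?_, ?_⟩
  · have hset : ({g1, g2, g3} : Set (Fin 6 → Wt p)) = Set.range ![g1,g2,g3] := by
      ext w; simp [Matrix.range_cons]; tauto
    rw [hset, rank_span hli, Cardinal.mk_range_eq _ hli.injective]
    simp
  · constructor
    intro α m hm
    by_cases hα : α = 0
    · exact Or.inl hα
    right
    obtain ⟨v, rfl⟩ := Submodule.Quotient.mk_surjective _ m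
    rw [← Submodule.Quotient.mk_smul, Submodule.Quotient.mk_eq_zero, ← hkerr, map_smul] at hm
    rw [Submodule.Quotient.mk_eq_zero, ← hkerr]
    rcases smul_eq_zero.mp hm with h | h
    · exact absurd h hα
    · exact h
  · intro d
    constructor
    · rintro ⟨m, hm, d', rfl⟩
      rw [mem_span_triple] at hm
      obtain ⟨α, β, γ, rfl⟩ := hm
      refine ⟨![σW p ((α•g1+β•g2+γ•g3+(p:Wt p)•d') 1),
               σW p (a*α + d' 0 + xs * d' 3 + zs * d' 5),
               σW p ((α•g1+β•g2+γ•g3+(p:Wt p)•d') 3),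
               σW p (c*β + d' 2 + ys * d' 5),
               σW p ((α•g1+β•g2+γ•g3+(p:Wt p)•d') 5),
               σW p (i*γ + d' 4)], ?_⟩
      have hx' : σW p xs = x := hσ x
      have hy' : σW p ys = y := hσ y
      have hz' : σW p zs = z := hσ z
      funext j
      fin_cases j
      · simp [FD, hg1, hg2, hg3, map_add, map_mul, map_neg, map_natCast]
      · simp [FD, hg1, hg2, hg3, map_add, map_mul, map_neg, map_natCast]
        linear_combination (-(σW p β + (p:Wt p) * σW p (d' 3))) * hx'
          + (-(σW p γ + (p:Wt p) * σW p (d' 5))) * hz'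
      · simp [FD, hg1, hg2, hg3, map_add, map_mul, map_neg, map_natCast]
      · simp [FD, hg1, hg2, hg3, map_add, map_mul, map_neg, map_natCast]
        linear_combination (-(σW p γ + (p:Wt p) * σW p (d' 5))) * hy'
      · simp [FD, hg1, hg2, hg3, map_add, map_mul, map_neg, map_natCast]
      · simp [FD, hg1, hg2, hg3, map_add, map_mul, map_neg, map_natCast]; ring
    · rintro ⟨d'', hd''⟩
      have h1 := congrFun hd'' 1
      have h3 := congrFun hd'' 3
      have h5 := congrFun hd'' 5
      simp only [FD, v6_1, v6_3, v6_5, Pi.smul_apply, smul_eq_mul] at h1 h3 h5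
      have k1 : d 0 + xs * d 3 + zs * d 5 = (p:Wt p) * (σW p).symm (d'' 1) := by
        have := congrArg (σW p).symm h1
        simpa [map_add, map_mul, map_natCast, ← hxs, ← hzs] using this
      have k3 : d 2 + ys * d 5 = (p:Wt p) * (σW p).symm (d'' 3) := by
        have := congrArg (σW p).symm h3
        simpa [map_add, map_mul, map_natCast, ← hys] using this
      have k5 : d 4 = (p:Wt p) * (σW p).symm (d'' 5) := by
        have := congrArg (σW p).symm h5
        simpa [map_mul, map_natCast] using this
      refine ⟨d 1 • g1 + d 3 • g2 + d 5 • g3,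
        mem_span_triple.mpr ⟨d 1, d 3, d 5, rfl⟩,
        ![(σW p).symm (d'' 1) - a * d 1, 0, (σW p).symm (d'' 3) - c * d 3, 0,
          (σW p).symm (d'' 5) - i * d 5, 0], ?_⟩
      funext j
      fin_cases j
      · simp [hg1, hg2, hg3]; linear_combination k1
      · simp [hg1, hg2, hg3]
      · simp [hg1, hg2, hg3]; linear_combination k3
      · simp [hg1, hg2, hg3]
      · simp [hg1, hg2, hg3]; linear_combination k5
      · simp [hg1, hg2, hg3]

end St15

/-- the explicit map `φ : D(x,y,z) → D(0,0,0)` is an isogeny of Dieudonné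
modules, `Fil ⊆ D(x,y,z)` and `Fil′ ⊆ D(0,0,0)` are admissible filtrations, and
`φ(Fil) ⊆ Fil′`. Here `i = (Φ − ψc)/θ`, `a = (σ⁻¹(R) + iQ)/(σ⁻¹(Q) + piR)` and
`b′ = (σ⁻¹(T) + iS)/(σ⁻¹(S) + piT)` are characterized by their defining equations. -/
theorem statement15 (p : ℕ) [Fact p.Prime] (hp : Odd p)
    (x y z β' Q R T : Wt p)
    (hβ'u : IsUnit β') (hQu : IsUnit Q) (hRu : IsUnit R) (hTu : IsUnit T)
    (hβ' : σW p (σW p β') - β' = x)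
    (hQ : σW p (σW p Q) - Q = (p : Wt p) * y * σW p β')
    (hR : σW p (σW p R) - R = y + (p : Wt p) * z)
    (hT : σW p (σW p T) - T = y)
    (hu1 : IsUnit (1 - Q)) (hu2 : IsUnit (Q - σW p Q)) (hu3 : IsUnit (R - β' * Q))
    (hu4 : IsUnit (T - β' * Q)) (hu5 : IsUnit (-Q * (T - 1) + R - β' * Q))
    (hu6 : IsUnit ((σW p).symm Q * (T - 1) - (R - β' * Q)))
    (S lam1 mu1 nu1 nu2 del1 del2 Phi psi theta : Wt p)
    (hS : S = 1 + (p : Wt p) * T)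
    (hlam1 : lam1 = (p : Wt p) * R * (σW p).symm β' - Q)
    (hmu1 : mu1 = (σW p).symm Q - (p : Wt p) * β' * (σW p).symm R)
    (hnu1 : nu1 = (p : Wt p) * (R - β' * Q))
    (hnu2 : nu2 = (p : Wt p) * (T - S))
    (hdel1 : del1 = (σW p).symm R - (σW p).symm Q * (σW p).symm β')
    (hdel2 : del2 = (σW p).symm T - (σW p).symm S)
    (hPhi : Phi = del1 * nu2 - del2 * nu1)
    (hpsi : psi = mu1 * nu2 - nu1)
    (htheta : theta = lam1 * nu2 + nu1)
    (c : Wt p)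
    (hc : c ^ 2 * (-(nu1 * psi)) + c * (-(lam1 * psi) + mu1 * theta + nu1 * Phi)
      + (lam1 * Phi - del1 * theta) = 0)
    (i a b' : Wt p)
    (hi : theta * i = Phi - psi * c)
    (ha : ((σW p).symm Q + (p : Wt p) * i * R) * a = (σW p).symm R + i * Q)
    (hb' : ((σW p).symm S + (p : Wt p) * i * T) * b' = (σW p).symm T + i * S)
    (φ : (Fin 6 → Wt p) →ₗ[Wt p] (Fin 6 → Wt p))
    (hφ0 : φ (Pi.single 0 1) = ![(p : Wt p) ^ 2, 0, 0, 0, 0, 0])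
    (hφ1 : φ (Pi.single 1 1) = ![0, (p : Wt p) ^ 2, 0, 0, 0, 0])
    (hφ2 : φ (Pi.single 2 1) = ![(p : Wt p), (p : Wt p) * β', (p : Wt p), (p : Wt p), 0, 0])
    (hφ3 : φ (Pi.single 3 1)
      = ![(p : Wt p) ^ 2 * σW p β', (p : Wt p), (p : Wt p) ^ 2, (p : Wt p), 0, 0])
    (hφ4 : φ (Pi.single 4 1) = ![Q, R, S, T, 1, 0])
    (hφ5 : φ (Pi.single 5 1)
      = ![(p : Wt p) * σW p R, σW p Q, (p : Wt p) * σW p T, σW p S, 0, 1]) :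
    (Function.Injective φ ∧
      (∀ v, φ (FD p x y z v) = FD p 0 0 0 (φ v)) ∧
      (∀ v, φ (VD p x y z v) = VD p 0 0 0 (φ v)) ∧
      (∃ n : ℕ, ∀ d : Fin 6 → Wt p, (p : Wt p) ^ n • d ∈ LinearMap.range φ)) ∧
    AdmissibleFil p (FD p x y z) 3
      (Submodule.span (Wt p)
        {![(p : Wt p) * a, 1, 0, 0, 0, 0],
          ![-(σW p).symm x, 0, (p : Wt p) * c, 1, 0, 0],
          ![-(σW p).symm z, 0, -(σW p).symm y, 0, (p : Wt p) * i, 1]}) ∧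
    AdmissibleFil p (FD p 0 0 0) 3
      (Submodule.span (Wt p)
        {![(p : Wt p) * a, 1, 0, 0, 0, 0],
          ![0, 0, (p : Wt p) * b', 1, 0, 0],
          ![0, 0, 0, 0, (p : Wt p) * i, 1]}) ∧
    Submodule.map φ
        (Submodule.span (Wt p)
          {![(p : Wt p) * a, 1, 0, 0, 0, 0],
            ![-(σW p).symm x, 0, (p : Wt p) * c, 1, 0, 0],
            ![-(σW p).symm z, 0, -(σW p).symm y, 0, (p : Wt p) * i, 1]})
      ≤ Submodule.span (Wt p)
          {![(p : Wt p) * a, 1, 0, 0, 0, 0],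
            ![0, 0, (p : Wt p) * b', 1, 0, 0],
            ![0, 0, 0, 0, (p : Wt p) * i, 1]} := by
  classical
  subst htheta; subst hpsi; subst hPhi; subst hdel2; subst hdel1
  subst hnu2; subst hnu1; subst hmu1; subst hlam1; subst hS
  simp only [map_add, map_one, map_mul, map_natCast] at hc hi hb' hφ5
  have hp0 : (p : Wt p) ≠ 0 := (WittVector.irreducible p).ne_zero
  have hpnu : ¬IsUnit (p : Wt p) := (WittVector.irreducible p).not_isUnit
  haveI hLR : IsLocalRing (Wt p) :=
    (WittVector.isDiscreteValuationRing (p := p) (k := Kbar p)).toIsLocalRing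
  have hunit_add : ∀ u w : Wt p, IsUnit u → IsUnit (u + (p : Wt p) * w) := by
    intro u w hu
    by_contra hnu
    have h2 : -((p : Wt p) * w) ∈ nonunits (Wt p) := by
      rw [mem_nonunits_iff, IsUnit.neg_iff]
      intro hh; exact hpnu (isUnit_of_mul_isUnit_left hh)
    have h3 := IsLocalRing.nonunits_add (mem_nonunits_iff.mpr hnu) h2
    rw [add_neg_cancel_right] at h3
    exact h3 hu
  have hu1p : IsUnit (1 - (p : Wt p)) := by
    have h := hunit_add 1 (-1) isUnit_one
    rw [mul_neg_one] at h
    rwa [sub_eq_add_neg]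
  have s1 : σW p β' - (σW p).symm β' = (σW p).symm x := by
    have h := congrArg (σW p).symm hβ'
    simpa only [map_sub, RingEquiv.symm_apply_apply] using h
  have s2 : σW p Q - (σW p).symm Q = (p : Wt p) * (σW p).symm y * β' := by
    have h := congrArg (σW p).symm hQ
    simpa only [map_sub, map_mul, map_natCast, RingEquiv.symm_apply_apply] using h
  have s3 : σW p R - (σW p).symm R = (σW p).symm y + (p : Wt p) * (σW p).symm z := by
    have h := congrArg (σW p).symm hR
    simpa only [map_sub, map_add, map_mul, map_natCast, RingEquiv.symm_apply_apply] using h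
  have s4 : σW p T - (σW p).symm T = (σW p).symm y := by
    have h := congrArg (σW p).symm hT
    simpa only [map_sub, RingEquiv.symm_apply_apply] using h
  have hφv : ∀ v : Fin 6 → Wt p, φ v
      = v 0 • φ (Pi.single 0 1) + v 1 • φ (Pi.single 1 1) + v 2 • φ (Pi.single 2 1)
      + v 3 • φ (Pi.single 3 1) + v 4 • φ (Pi.single 4 1) + v 5 • φ (Pi.single 5 1) := by
    intro v
    conv_lhs => rw [St15.vec6_decomp v]
    simp only [map_add, map_smul]
  -- injectivity
  have hinj : Function.Injective φ := by
    intro u w huw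
    rw [← sub_eq_zero]
    set v := u - w with hv
    have h0 : φ v = 0 := by rw [hv, map_sub, huw, sub_self]
    rw [hφv, hφ0, hφ1, hφ2, hφ3, hφ4, hφ5] at h0
    have e0 := congrFun h0 0
    have e1 := congrFun h0 1
    have e2 := congrFun h0 2
    have e3 := congrFun h0 3
    have e4 := congrFun h0 4
    have e5 := congrFun h0 5
    simp only [St15.v6_0, St15.v6_1, St15.v6_2, St15.v6_3, St15.v6_4, St15.v6_5,
      Pi.add_apply, Pi.smul_apply, smul_eq_mul, Pi.zero_apply, mul_zero, mul_one,
      add_zero, zero_add] at e0 e1 e2 e3 e4 e5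
    rw [e4, e5] at e0 e1 e2 e3
    simp only [mul_zero, zero_mul, add_zero] at e0 e1 e2 e3
    have h3 : v 3 = 0 := St15.hcan (mul_ne_zero hp0 hu1p.ne_zero) (by linear_combination e3 - e2)
    rw [h3] at e0 e1 e2
    simp only [mul_zero, zero_mul, add_zero] at e0 e1 e2
    have h2 : v 2 = 0 := St15.hcan hp0 (by linear_combination e2)
    rw [h2] at e0 e1
    simp only [mul_zero, zero_mul, add_zero] at e0 e1
    have h0' : v 0 = 0 := St15.hcan (pow_ne_zero 2 hp0) (by linear_combination e0)
    have h1' : v 1 = 0 := St15.hcan (pow_ne_zero 2 hp0) (by linear_combination e1)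
    funext j
    fin_cases j
    · exact h0'
    · exact h1'
    · exact h2
    · exact h3
    · exact e4
    · exact e5
  -- F-commutation
  have hF : ∀ v, φ (FD p x y z v) = FD p 0 0 0 (φ v) := by
    intro v
    rw [hφv (FD p x y z v), hφv v, hφ0, hφ1, hφ2, hφ3, hφ4, hφ5]
    funext j
    fin_cases j
    · simp [FD, map_add, map_mul, map_pow, map_natCast, smul_eq_mul]
      linear_combination (-((p : Wt p) * σW p (v 5))) * hQ
    · simp [FD, map_add, map_mul, map_pow, map_natCast, smul_eq_mul]
      linear_combination (-((p : Wt p) ^ 2 * σW p (v 3))) * hβ' + (-((p : Wt p) * σW p (v 5))) * hR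
    · simp [FD, map_add, map_mul, map_pow, map_natCast, smul_eq_mul]
      linear_combination (-((p : Wt p) ^ 2 * σW p (v 5))) * hT
    · simp [FD, map_add, map_mul, map_pow, map_natCast, smul_eq_mul]
      linear_combination (-((p : Wt p) * σW p (v 5))) * hT
    · simp [FD, map_add, map_mul, map_pow, map_natCast, smul_eq_mul]
    · simp [FD, map_add, map_mul, map_pow, map_natCast, smul_eq_mul]
  -- V-commutation
  have hV : ∀ v, φ (VD p x y z v) = VD p 0 0 0 (φ v) := by
    intro v
    rw [hφv (VD p x y z v), hφv v, hφ0, hφ1, hφ2, hφ3, hφ4, hφ5]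
    funext j
    fin_cases j
    · simp [VD, map_add, map_sub, map_mul, map_pow, map_natCast, smul_eq_mul]
      linear_combination ((p : Wt p) ^ 2 * (σW p).symm (v 2)) * s1
        + ((p : Wt p) * (σW p).symm (v 4)) * s3
    · simp [VD, map_add, map_sub, map_mul, map_pow, map_natCast, smul_eq_mul]
      linear_combination ((σW p).symm (v 4)) * s2
    · simp [VD, map_add, map_sub, map_mul, map_pow, map_natCast, smul_eq_mul]
      linear_combination ((p : Wt p) * (σW p).symm (v 4)) * s4
    · simp [VD, map_add, map_sub, map_mul, map_pow, map_natCast, smul_eq_mul]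
      linear_combination ((p : Wt p) * (σW p).symm (v 4)) * s4
    · simp [VD, map_add, map_sub, map_mul, map_pow, map_natCast, smul_eq_mul]
    · simp [VD, map_add, map_sub, map_mul, map_pow, map_natCast, smul_eq_mul]
  -- range
  have hsingle : ∀ jj : Fin 6, φ (Pi.single jj 1)
      = φ (Pi.single jj 1) := fun _ => rfl
  have m0 : ((p : Wt p) ^ 2 • ![1,0,0,0,0,(0:Wt p)]) ∈ LinearMap.range φ := by
    refine ⟨Pi.single 0 1, ?_⟩
    rw [hφ0]; funext j; fin_cases j <;> simp
  have m1 : ((p : Wt p) ^ 2 • ![0,1,0,0,0,(0:Wt p)]) ∈ LinearMap.range φ := by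
    refine ⟨Pi.single 1 1, ?_⟩
    rw [hφ1]; funext j; fin_cases j <;> simp
  have m2 : ((p : Wt p) ^ 2 • ![0,0,1,0,0,(0:Wt p)]) ∈ LinearMap.range φ := by
    have hmem : ((1 - (p : Wt p)) • ((p : Wt p) ^ 2 • ![0,0,1,0,0,(0:Wt p)]))
        ∈ LinearMap.range φ := by
      refine ⟨(p : Wt p) • ![0,0,1,0,0,(0:Wt p)] - (p : Wt p) • ![0,0,0,1,0,(0:Wt p)]
        - (1 - (p : Wt p) * σW p β') • ![1,0,0,0,0,(0:Wt p)]
        - (β' - 1) • ![0,1,0,0,0,(0:Wt p)], ?_⟩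
      rw [hφv, hφ0, hφ1, hφ2, hφ3, hφ4, hφ5]
      funext j; fin_cases j <;> (simp; try ring)
    have h2 := Submodule.smul_mem (LinearMap.range φ) ((hu1p.unit⁻¹ : (Wt p)ˣ) : Wt p) hmem
    rwa [smul_smul, IsUnit.val_inv_mul, one_smul] at h2
  have m3 : ((p : Wt p) ^ 2 • ![0,0,0,1,0,(0:Wt p)]) ∈ LinearMap.range φ := by
    have hmem : ((1 - (p : Wt p)) • ((p : Wt p) ^ 2 • ![0,0,0,1,0,(0:Wt p)]))
        ∈ LinearMap.range φ := by
      refine ⟨(p : Wt p) • ![0,0,0,1,0,(0:Wt p)] - (p : Wt p) ^ 2 • ![0,0,1,0,0,(0:Wt p)]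
        - ((p : Wt p) * (σW p β' - 1)) • ![1,0,0,0,0,(0:Wt p)]
        - (1 - (p : Wt p) * β') • ![0,1,0,0,0,(0:Wt p)], ?_⟩
      rw [hφv, hφ0, hφ1, hφ2, hφ3, hφ4, hφ5]
      funext j; fin_cases j <;> (simp; try ring)
    have h2 := Submodule.smul_mem (LinearMap.range φ) ((hu1p.unit⁻¹ : (Wt p)ˣ) : Wt p) hmem
    rwa [smul_smul, IsUnit.val_inv_mul, one_smul] at h2
  have m4 : ((p : Wt p) ^ 2 • ![0,0,0,0,1,(0:Wt p)]) ∈ LinearMap.range φ := by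
    have hid : ((p : Wt p) ^ 2 • ![0,0,0,0,1,(0:Wt p)])
        = φ ((p : Wt p) ^ 2 • ![0,0,0,0,1,(0:Wt p)]) - Q • ((p : Wt p) ^ 2 • ![1,0,0,0,0,(0:Wt p)])
          - R • ((p : Wt p) ^ 2 • ![0,1,0,0,0,(0:Wt p)])
          - (1 + (p : Wt p) * T) • ((p : Wt p) ^ 2 • ![0,0,1,0,0,(0:Wt p)])
          - T • ((p : Wt p) ^ 2 • ![0,0,0,1,0,(0:Wt p)]) := by
      rw [hφv ((p : Wt p) ^ 2 • ![0,0,0,0,1,(0:Wt p)]), hφ0, hφ1, hφ2, hφ3, hφ4, hφ5]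
      funext j; fin_cases j <;> (simp; try ring)
    rw [hid]
    exact sub_mem (sub_mem (sub_mem (sub_mem (LinearMap.mem_range_self φ _)
      (Submodule.smul_mem _ _ m0)) (Submodule.smul_mem _ _ m1))
      (Submodule.smul_mem _ _ m2)) (Submodule.smul_mem _ _ m3)
  have m5 : ((p : Wt p) ^ 2 • ![0,0,0,0,0,(1:Wt p)]) ∈ LinearMap.range φ := by
    have hid : ((p : Wt p) ^ 2 • ![0,0,0,0,0,(1:Wt p)])
        = φ ((p : Wt p) ^ 2 • ![0,0,0,0,0,(1:Wt p)])
          - ((p : Wt p) * σW p R) • ((p : Wt p) ^ 2 • ![1,0,0,0,0,(0:Wt p)])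
          - (σW p Q) • ((p : Wt p) ^ 2 • ![0,1,0,0,0,(0:Wt p)])
          - ((p : Wt p) * σW p T) • ((p : Wt p) ^ 2 • ![0,0,1,0,0,(0:Wt p)])
          - (1 + (p : Wt p) * σW p T) • ((p : Wt p) ^ 2 • ![0,0,0,1,0,(0:Wt p)]) := by
      rw [hφv ((p : Wt p) ^ 2 • ![0,0,0,0,0,(1:Wt p)]), hφ0, hφ1, hφ2, hφ3, hφ4, hφ5]
      funext j; fin_cases j <;> (simp; try ring)
    rw [hid]
    exact sub_mem (sub_mem (sub_mem (sub_mem (LinearMap.mem_range_self φ _)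
      (Submodule.smul_mem _ _ m0)) (Submodule.smul_mem _ _ m1))
      (Submodule.smul_mem _ _ m2)) (Submodule.smul_mem _ _ m3)
  have hrange : ∀ d : Fin 6 → Wt p, (p : Wt p) ^ 2 • d ∈ LinearMap.range φ := by
    intro d
    rw [St15.vec6_decomp' d, smul_add, smul_add, smul_add, smul_add, smul_add,
      smul_comm ((p : Wt p) ^ 2) (d 0), smul_comm ((p : Wt p) ^ 2) (d 1),
      smul_comm ((p : Wt p) ^ 2) (d 2), smul_comm ((p : Wt p) ^ 2) (d 3),
      smul_comm ((p : Wt p) ^ 2) (d 4), smul_comm ((p : Wt p) ^ 2) (d 5)]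
    exact add_mem (add_mem (add_mem (add_mem (add_mem (Submodule.smul_mem _ _ m0)
      (Submodule.smul_mem _ _ m1)) (Submodule.smul_mem _ _ m2))
      (Submodule.smul_mem _ _ m3)) (Submodule.smul_mem _ _ m4)) (Submodule.smul_mem _ _ m5)
  -- scalar identities
  have hnu1ne : ((p : Wt p) * (R - β' * Q)) ≠ 0 := mul_ne_zero hp0 hu3.ne_zero
  have hθne : (((p : Wt p) * R * (σW p).symm β' - Q) * ((p : Wt p) * (T - (1 + (p : Wt p) * T))) + ((p : Wt p) * (R - β' * Q))) ≠ 0 := by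
    have heq : (((p : Wt p) * R * (σW p).symm β' - Q) * ((p : Wt p) * (T - (1 + (p : Wt p) * T))) + ((p : Wt p) * (R - β' * Q)))
        = (p : Wt p) * ((-Q * (T - 1) + R - β' * Q)
          + (p : Wt p) * (R * (σW p).symm β' * (T - 1 - (p : Wt p) * T) + Q * T)) := by ring
    rw [heq]
    exact mul_ne_zero hp0 (hunit_add _ _ hu5).ne_zero
  have hden1 : (σW p).symm Q + (p : Wt p) * i * R ≠ 0 := by
    have heq : (σW p).symm Q + (p : Wt p) * i * R = (σW p).symm Q + (p : Wt p) * (i * R) := by ring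
    rw [heq]
    exact (hunit_add _ _ (hQu.map (σW p).symm)).ne_zero
  have hden2 : (1 : Wt p) + (p : Wt p) * (σW p).symm T + (p : Wt p) * i * T ≠ 0 := by
    have heq : (1 : Wt p) + (p : Wt p) * (σW p).symm T + (p : Wt p) * i * T
        = 1 + (p : Wt p) * ((σW p).symm T + i * T) := by ring
    rw [heq]
    exact (hunit_add _ _ isUnit_one).ne_zero
  have hB : ((σW p).symm R - (σW p).symm Q * (σW p).symm β') + ((p : Wt p) * R * (σW p).symm β' - Q) * ((σW p).symm T - (1 + (p : Wt p) * (σW p).symm T)) - c * (((p : Wt p) * R * (σW p).symm β' - Q) + ((σW p).symm Q - (p : Wt p) * β' * (σW p).symm R) + (((σW p).symm R - (σW p).symm Q * (σW p).symm β') * ((p : Wt p) * (T - (1 + (p : Wt p) * T))) - ((σW p).symm T - (1 + (p : Wt p) * (σW p).symm T)) * ((p : Wt p) * (R - β' * Q)))) + c ^ 2 * (((σW p).symm Q - (p : Wt p) * β' * (σW p).symm R) * ((p : Wt p) * (T - (1 + (p : Wt p) * T))) - ((p : Wt p) * (R - β' * Q))) = 0 :=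
    St15.hcan hnu1ne (by linear_combination -hc)
  have hD : ((σW p).symm R - (σW p).symm Q * (σW p).symm β') - i * ((p : Wt p) * R * (σW p).symm β' - Q) - c * ((σW p).symm Q - (p : Wt p) * β' * (σW p).symm R) - i * c * ((p : Wt p) * (R - β' * Q)) = 0 :=
    St15.hcan hθne (by linear_combination (-(((p : Wt p) * R * (σW p).symm β' - Q) + c * ((p : Wt p) * (R - β' * Q)))) * hi - hc)
  have hDs : ((σW p).symm T - (1 + (p : Wt p) * (σW p).symm T)) + i - c - i * c * ((p : Wt p) * (T - (1 + (p : Wt p) * T))) = 0 :=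
    St15.hcan hθne (by linear_combination (1 - c * ((p : Wt p) * (T - (1 + (p : Wt p) * T)))) * hi + ((p : Wt p) * (T - (1 + (p : Wt p) * T))) * hB)
  have aI : a * (1 + (p : Wt p) * c * β') = c + (σW p).symm β' :=
    St15.hcan hden1 (by linear_combination (1 + (p : Wt p) * c * β') * ha + hD)
  have aII : b' * (1 + (p : Wt p) * c) = c + 1 :=
    St15.hcan hden2 (by linear_combination (1 + (p : Wt p) * c) * hb' + hDs)
  -- the map sends Fil into Fil'
  have hmap : Submodule.map φ
      (Submodule.span (Wt p)
        {![(p : Wt p) * a, 1, 0, 0, 0, 0],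
          ![-(σW p).symm x, 0, (p : Wt p) * c, 1, 0, 0],
          ![-(σW p).symm z, 0, -(σW p).symm y, 0, (p : Wt p) * i, 1]})
      ≤ Submodule.span (Wt p)
        {![(p : Wt p) * a, 1, 0, 0, 0, 0],
          ![0, 0, (p : Wt p) * b', 1, 0, 0],
          ![0, 0, 0, 0, (p : Wt p) * i, 1]} := by
    rw [Submodule.map_span, Submodule.span_le]
    rintro w ⟨v, hv, rfl⟩
    simp only [Set.mem_insert_iff, Set.mem_singleton_iff] at hv
    rw [SetLike.mem_coe, St15.mem_span_triple]
    rcases hv with rfl | rfl | rfl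
    · refine ⟨(p : Wt p) ^ 2, 0, 0, ?_⟩
      rw [hφv, hφ0, hφ1, hφ2, hφ3, hφ4, hφ5]
      funext j; fin_cases j <;> (simp; try ring)
    · refine ⟨(p : Wt p) * ((p : Wt p) * c * β' + 1), (p : Wt p) * ((p : Wt p) * c + 1), 0, ?_⟩
      rw [hφv, hφ0, hφ1, hφ2, hφ3, hφ4, hφ5]
      funext j
      fin_cases j
      · simp [smul_eq_mul]
        linear_combination (p : Wt p) ^ 2 * s1 - (p : Wt p) ^ 2 * aI
      · simp [smul_eq_mul]
        ring
      · simp [smul_eq_mul]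
        linear_combination (-((p : Wt p) ^ 2)) * aII
      · simp [smul_eq_mul]
        ring
      · simp; try ring
      · simp; try ring
    · refine ⟨σW p Q + (p : Wt p) * i * R - (p : Wt p) * β' * (σW p).symm y,
        (1 + (p : Wt p) * σW p T) + (p : Wt p) * i * T - (p : Wt p) * (σW p).symm y, 1, ?_⟩
      rw [hφv, hφ0, hφ1, hφ2, hφ3, hφ4, hφ5]
      funext j
      fin_cases j
      · simp [smul_eq_mul]
        linear_combination (p : Wt p) * s3 + (-((p : Wt p) * a)) * s2 + (-(p : Wt p)) * ha
      · simp [smul_eq_mul]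
        ring
      · simp [smul_eq_mul]
        linear_combination (p : Wt p) * s4 - (p : Wt p) ^ 2 * b' * s4 - (p : Wt p) * hb'
      · simp [smul_eq_mul]
        ring
      · simp; try ring
      · simp; try ring
  exact ⟨⟨hinj, hF, hV, ⟨2, hrange⟩⟩,
    St15.admissible_generic x y z a c i,
    by simpa using St15.admissible_generic (p := p) 0 0 0 a b' i,
    hmap⟩
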